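/- Let n ≥ 1 and a,b ∈ ℤ with gcd(a,b,n) = 1. The circulant digraph C⃗(n;a,b) is Hamiltonian if and only if there exist nonnegative integers i, j such that i + j = gcd(b−a, n) = gcd(ai + bj, n). -/

import Mathlib

open Finset

lemma isUnit_intCast_of_gcd {m : ℕ} {x : ℤ} (h : Int.gcd x m = 1) :
    IsUnit ((x : ℤ) : ZMod m) := by
  obtain ⟨u, v, huv⟩ := Int.isCoprime_iff_gcd_eq_one.mpr h
  apply IsUnit.of_mul_eq_one ((u : ℤ) : ZMod m)
  have : ((u * x + v * m : ℤ) : ZMod m) = ((1 : ℤ) : ZMod m) := by rw [huv]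
  push_cast at this
  simpa [ZMod.natCast_self, mul_comm] using this

lemma gcd_eq_one_of_isUnit {m : ℕ} [NeZero m] {x : ℤ} (h : IsUnit ((x : ℤ) : ZMod m)) :
    Int.gcd x m = 1 := by
  obtain ⟨u, hu⟩ := h.exists_right_inv
  set y : ℤ := (u.val : ℤ) with hy
  have hyu : ((y : ℤ) : ZMod m) = u := by
    rw [hy]; push_cast; exact ZMod.natCast_rightInverse u
  have : ((x * y - 1 : ℤ) : ZMod m) = 0 := by
    push_cast
    rw [hyu, hu]; ring
  obtain ⟨c, hc⟩ := (ZMod.intCast_zmod_eq_zero_iff_dvd _ _).mp this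
  apply Int.isCoprime_iff_gcd_eq_one.mp
  exact ⟨y, -c, by linarith [hc]⟩

lemma finset_empty_or_univ {m : ℕ} [NeZero m] (T : Finset (ZMod m)) (ε : ZMod m)
    (hε : IsUnit ε) (hT : ∀ z ∈ T, z + ε ∈ T) : T = ∅ ∨ T = Finset.univ := by
  rcases T.eq_empty_or_nonempty with h | ⟨z, hz⟩
  · exact Or.inl h
  right
  apply Finset.eq_univ_iff_forall.mpr
  intro y
  have key : ∀ c : ℕ, z + (c : ZMod m) * ε ∈ T := by
    intro c
    induction c with
    | zero => simpa using hz
    | succ c ih =>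
        have h1 : z + ((c : ℕ) + 1 : ZMod m) * ε = (z + (c : ZMod m) * ε) + ε := by
          push_cast; ring
        rw [show (((c : ℕ) + 1 : ℕ) : ZMod m) = ((c : ℕ) : ZMod m) + 1 by push_cast; ring, h1]
        exact hT _ ih
  set u := hε.unit with hu
  set c : ℕ := (((y - z) * (↑u⁻¹ : ZMod m)).val) with hc
  have hcast : ((c : ℕ) : ZMod m) = (y - z) * (↑u⁻¹ : ZMod m) :=
    ZMod.natCast_rightInverse _
  have hfin : z + (c : ZMod m) * ε = y := by
    rw [hcast]
    have hεu : ε = (↑u : ZMod m) := (IsUnit.unit_spec hε).symm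
    rw [hεu, mul_assoc, Units.inv_mul]
    ring
  rw [← hfin]
  exact key c

lemma column_dichotomy {m : ℕ} [NeZero m] (G G' : ℕ → ZMod m) (ε : ZMod m) (hε : IsUnit ε)
    (P : ℕ → Prop) [DecidablePred P]
    (hG : Set.InjOn G (Finset.range m)) (hG' : Set.InjOn G' (Finset.range m))
    (htr : ∀ k, k < m → G' k = G k + (if P k then ε else 0)) :
    (∀ k, k < m → P k) ∨ (∀ k, k < m → ¬ P k) := by
  classical
  set R : Finset ℕ := Finset.range m with hR
  set I : Finset ℕ := R.filter P with hI
  set I' : Finset ℕ := R.filter (fun k => ¬ P k) with hI'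
  set T : Finset (ZMod m) := I.image G with hT
  set T' : Finset (ZMod m) := I'.image G with hT'
  have hRuniv : ∀ (F : ℕ → ZMod m), Set.InjOn F R → R.image F = Finset.univ := by
    intro F hF
    apply Finset.eq_univ_of_card
    rw [Finset.card_image_of_injOn hF, hR, Finset.card_range, ZMod.card]
  have hGuniv : R.image G = Finset.univ := hRuniv G hG
  have hG'univ : R.image G' = Finset.univ := hRuniv G' hG'
  have hsplit : I ∪ I' = R := Finset.filter_union_filter_not_eq P R
  have hTT' : T ∪ T' = Finset.univ := by
    rw [hT, hT', ← Finset.image_union, hsplit]; exact hGuniv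
  have hIsub : (I : Set ℕ) ⊆ (R : Set ℕ) := by
    intro x hx; simp only [hI, Finset.coe_filter, Set.mem_setOf_eq] at hx
    exact_mod_cast hx.1
  have hI'sub : (I' : Set ℕ) ⊆ (R : Set ℕ) := by
    intro x hx; simp only [hI', Finset.coe_filter, Set.mem_setOf_eq] at hx
    exact_mod_cast hx.1
  have hcards : T.card + T'.card = m := by
    rw [hT, hT', Finset.card_image_of_injOn (hG.mono hIsub),
      Finset.card_image_of_injOn (hG.mono hI'sub)]
    rw [hI, hI']
    have := Finset.card_filter_add_card_filter_not (s := R) (p := P)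
    rw [this, hR, Finset.card_range]
  -- A := T.image (· + ε)
  set A : Finset (ZMod m) := T.image (· + ε) with hA
  have hAT' : A ∪ T' = Finset.univ := by
    rw [← hG'univ, ← hsplit, Finset.image_union]
    congr 1
    · -- image G' I = A
      rw [hA, hT, Finset.image_image]
      apply Finset.image_congr
      intro k hk
      simp only [hI, Finset.mem_coe, Finset.mem_filter, hR, Finset.mem_range] at hk
      simp [htr k hk.1, hk.2]
    · -- image G' I' = T'
      rw [hT']
      apply Finset.image_congr
      intro k hk
      simp only [hI', Finset.mem_coe, Finset.mem_filter, hR, Finset.mem_range] at hk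
      simp [htr k hk.1, hk.2]
  have hAcard : A.card = T.card := Finset.card_image_of_injective _ (add_left_injective ε)
  have hdisjA : A ∩ T' = ∅ := by
    have h1 := Finset.card_union_add_card_inter A T'
    rw [hAT'] at h1
    have h2 : Fintype.card (ZMod m) = m := ZMod.card m
    rw [Finset.card_univ, h2] at h1
    have : (A ∩ T').card = 0 := by omega
    exact Finset.card_eq_zero.mp this
  have hdisjT : T ∩ T' = ∅ := by
    rw [Finset.eq_empty_iff_forall_notMem]
    intro z hz
    rw [Finset.mem_inter, hT, hT'] at hz
    obtain ⟨hz1, hz2⟩ := hz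
    obtain ⟨k, hk, hGk⟩ := Finset.mem_image.mp hz1
    obtain ⟨k', hk', hGk'⟩ := Finset.mem_image.mp hz2
    have : k = k' := hG (hIsub hk) (hI'sub hk') (by rw [hGk, hGk'])
    rw [hI, Finset.mem_filter] at hk
    rw [hI', Finset.mem_filter] at hk'
    rw [this] at hk
    exact hk'.2 hk.2
  have hAeqT : A = T := by
    have e1 : A = Finset.univ \ T' := by
      apply Finset.eq_of_subset_of_card_le
      · intro z hz
        rw [Finset.mem_sdiff]
        refine ⟨Finset.mem_univ z, ?_⟩
        intro hzT'
        have : z ∈ A ∩ T' := Finset.mem_inter.mpr ⟨hz, hzT'⟩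
        rw [hdisjA] at this; exact absurd this (Finset.notMem_empty z)
      · have : (Finset.univ \ T').card = m - T'.card := by
          rw [Finset.card_sdiff_of_subset (Finset.subset_univ T'), Finset.card_univ, ZMod.card]
        rw [this, hAcard]; omega
    have e2 : T = Finset.univ \ T' := by
      apply Finset.eq_of_subset_of_card_le
      · intro z hz
        rw [Finset.mem_sdiff]
        refine ⟨Finset.mem_univ z, ?_⟩
        intro hzT'
        have : z ∈ T ∩ T' := Finset.mem_inter.mpr ⟨hz, hzT'⟩
        rw [hdisjT] at this; exact absurd this (Finset.notMem_empty z)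
      · have : (Finset.univ \ T').card = m - T'.card := by
          rw [Finset.card_sdiff_of_subset (Finset.subset_univ T'), Finset.card_univ, ZMod.card]
        rw [this]; omega
    rw [e1, ← e2]
  have hclosed : ∀ z ∈ T, z + ε ∈ T := by
    intro z hz
    rw [← hAeqT, hA]
    exact Finset.mem_image_of_mem _ hz
  rcases finset_empty_or_univ T ε hε hclosed with hTe | hTu
  · right
    intro k hk hPk
    have : G k ∈ T := by
      rw [hT]
      apply Finset.mem_image_of_mem
      rw [hI, Finset.mem_filter, hR, Finset.mem_range]
      exact ⟨hk, hPk⟩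
    rw [hTe] at this; exact absurd this (Finset.notMem_empty _)
  · left
    intro k hk
    have hGkT : G k ∈ T := by rw [hTu]; exact Finset.mem_univ _
    rw [hT] at hGkT
    obtain ⟨k', hk', hGk'⟩ := Finset.mem_image.mp hGkT
    have hkR : k ∈ (R : Set ℕ) := by rw [hR]; simpa using hk
    have : k' = k := hG (hIsub hk') hkR hGk'
    rw [hI, Finset.mem_filter] at hk'
    rw [← this]
    exact hk'.2


/-- The circulant digraph `C⃗(n;a,b)` (vertices `ℤ/nℤ`, arcs `x → x+a`, `x → x+b`)
has a Hamiltonian circuit: a closed directed walk of length `n` visiting every vertex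
exactly once. -/
def IsHamiltonianCirculant (n : ℕ) (a b : ℤ) : Prop :=
  ∃ x : ℕ → ZMod n,
    (∀ i < n, x (i + 1) = x i + (a : ZMod n) ∨ x (i + 1) = x i + (b : ZMod n)) ∧
    x n = x 0 ∧
    ∀ i < n, ∀ j < n, x i = x j → i = j

lemma rankin_forward (n : ℕ) (hn : 1 ≤ n) (a b : ℤ)
    (H : IsHamiltonianCirculant n a b) :
    ∃ i j : ℕ, i + j = Int.gcd (b - a) n ∧
      Int.gcd (b - a) n = Int.gcd (a * i + b * j) n := by
  classical
  obtain ⟨x, hstep, hclose, hinj⟩ := H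
  set d : ℕ := Int.gcd (b - a) n with hd
  have hdpos : 0 < d := Int.gcd_pos_iff.mpr (Or.inr (by exact_mod_cast (by omega : n ≠ 0)))
  have hdvdn : d ∣ n := by
    have h1 : (d : ℤ) ∣ (n : ℤ) := Int.gcd_dvd_right _ _
    exact_mod_cast h1
  set m : ℕ := n / d with hm
  have hn_dm : n = d * m := (Nat.mul_div_cancel' hdvdn).symm
  have hmpos : 0 < m := by
    rcases Nat.eq_zero_or_pos m with h0 | h; · rw [h0, Nat.mul_zero] at hn_dm; omega
    · exact h
  haveI : NeZero m := ⟨hmpos.ne'⟩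
  have hdvdba : (d : ℤ) ∣ (b - a) := Int.gcd_dvd_left _ _
  set e : ℤ := (b - a) / (d : ℤ) with he
  have hde : (b - a) = (d : ℤ) * e := (Int.mul_ediv_cancel' hdvdba).symm
  have hem : Int.gcd e m = 1 := by
    have h1 : Int.gcd ((d:ℤ) * e) ((d:ℤ) * (m:ℤ)) = (d:ℤ).natAbs * Int.gcd e m :=
      Int.gcd_mul_left _ _ _
    rw [← hde] at h1
    have h2 : ((d:ℤ) * (m:ℤ)) = ((n:ℕ) : ℤ) := by rw [hn_dm]; push_cast; ring
    rw [h2] at h1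
    have h3 : (d:ℤ).natAbs = d := Int.natAbs_natCast d
    rw [h3, ← hd] at h1
    exact Nat.eq_of_mul_eq_mul_left hdpos (by omega)
  -- step indicator and partial counts
  set t : ℕ → ℕ := fun κ => if x (κ+1) = x κ + (b : ZMod n) then 1 else 0 with ht
  set W : ℕ → ℕ := fun κ => ∑ l ∈ Finset.range κ, t l with hWdef
  have hWsucc : ∀ κ, W (κ+1) = W κ + t κ := fun κ => Finset.sum_range_succ t κ
  have ht01 : ∀ κ, t κ = 0 ∨ t κ = 1 := by
    intro κ; by_cases h : x (κ+1) = x κ + (b : ZMod n) <;> simp [ht, h]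
  set X : ℕ → ℤ := fun κ => (κ : ℤ) * a + (b - a) * (W κ : ℤ) with hX
  have hxX : ∀ κ, κ ≤ n → x κ = x 0 + ((X κ : ℤ) : ZMod n) := by
    intro κ
    induction κ with
    | zero => intro _; simp [hX, hWdef]
    | succ κ ih =>
      intro hκ
      have hκn : κ < n := hκ
      have hxκ := ih (le_of_lt hκn)
      have hXs : X (κ+1) = X κ + a + (b - a) * (t κ : ℤ) := by
        simp only [hX, hWsucc]; push_cast; ring
      by_cases hb : x (κ+1) = x κ + (b : ZMod n)
      · have htκ : t κ = 1 := by rw [ht]; simp [hb]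
        rw [hb, hxκ, hXs, htκ]; push_cast; ring
      · have htκ : t κ = 0 := by rw [ht]; simp [hb]
        have ha : x (κ+1) = x κ + (a : ZMod n) := (hstep κ hκn).resolve_right hb
        rw [ha, hxκ, hXs, htκ]; push_cast; ring
  have hxinj' : ∀ κ, κ ≤ n → ∀ κ', κ' ≤ n → x κ = x κ' →
      κ = κ' ∨ (κ = 0 ∧ κ' = n) ∨ (κ = n ∧ κ' = 0) := by
    intro κ hκ κ' hκ' hxx
    rcases eq_or_lt_of_le hκ with rfl | hκn
    · rcases eq_or_lt_of_le hκ' with rfl | hκ'n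
      · left; rfl
      · have h1 : x 0 = x κ' := by rw [← hclose]; exact hxx
        have h0 := hinj 0 (by omega) κ' hκ'n h1
        right; right; exact ⟨rfl, h0.symm⟩
    · rcases eq_or_lt_of_le hκ' with rfl | hκ'n
      · rw [hclose] at hxx
        have h0 := hinj κ hκn 0 (by omega) hxx
        right; left; exact ⟨h0, rfl⟩
      · left; exact hinj κ hκn κ' hκ'n hxx
  set Hf : ℕ → ℕ → ℤ := fun r k => (k : ℤ) * a + e * (W (k * d + r) : ℤ) with hHf
  set G : ℕ → ℕ → ZMod m := fun r k => ((Hf r k : ℤ) : ZMod m) with hG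
  have hXdiff : ∀ r k k' : ℕ, X (k*d + r) - X (k'*d + r) = (d:ℤ) * (Hf r k - Hf r k') := by
    intro r k k'; simp only [hX, hHf, hde]; push_cast; ring
  have hidx_le : ∀ r, r ≤ d → ∀ k, k < m → k * d + r ≤ n := by
    intro r hr k hk
    have h1 : k * d + r ≤ (m-1) * d + d := by
      have := Nat.mul_le_mul_right d (by omega : k ≤ m - 1); omega
    have h2 : (m-1) * d + d = m * d := by
      have h3 : m - 1 + 1 = m := Nat.succ_pred_eq_of_pos hmpos
      calc (m-1) * d + d = ((m-1) + 1) * d := by ring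
        _ = m * d := by rw [h3]
    rw [hn_dm, mul_comm d m]; omega
  have hGinj : ∀ r, r ≤ d → Set.InjOn (G r) (Finset.range m) := by
    intro r hr k hk k' hk' hGkk
    simp only [Finset.coe_range, Set.mem_Iio] at hk hk'
    have h1 : ((m:ℕ):ℤ) ∣ (Hf r k' - Hf r k) :=
      (ZMod.intCast_eq_intCast_iff_dvd_sub _ _ _).mp hGkk
    have h2 : ((n:ℕ):ℤ) ∣ (X (k'*d + r) - X (k*d + r)) := by
      rw [hXdiff, hn_dm]; push_cast; exact mul_dvd_mul_left _ h1
    have i1 : k * d + r ≤ n := hidx_le r hr k hk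
    have i2 : k' * d + r ≤ n := hidx_le r hr k' hk'
    have hxeq : x (k*d + r) = x (k'*d + r) := by
      rw [hxX _ i1, hxX _ i2]
      congr 1
      exact (ZMod.intCast_eq_intCast_iff_dvd_sub _ _ _).mpr h2
    rcases hxinj' _ i1 _ i2 hxeq with heq | ⟨hz, hnn⟩ | ⟨hnn, hz⟩
    · have : k * d = k' * d := by omega
      exact Nat.eq_of_mul_eq_mul_right hdpos this
    · exfalso
      have hk'd : k' * d + r = n := hnn
      have hkd : k * d + r = 0 := hz
      have hr0 : r = 0 := by omega
      rw [hr0, add_zero, hn_dm, mul_comm d m] at hk'd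
      have : k' = m := Nat.eq_of_mul_eq_mul_right hdpos hk'd
      omega
    · exfalso
      have hkd : k * d + r = n := hnn
      have hr0 : r = 0 := by omega
      rw [hr0, add_zero, hn_dm, mul_comm d m] at hkd
      have : k = m := Nat.eq_of_mul_eq_mul_right hdpos hkd
      omega
  -- column constancy
  have hcol : ∀ r, r < d → ∀ k, k < m → t (k*d + r) = t r := by
    intro r hr
    have htrans : ∀ k, k < m →
        G (r+1) k = G r k + (if t (k*d+r) = 1 then ((e:ℤ) : ZMod m) else 0) := by
      intro k hk
      have hidx : k*d + (r+1) = (k*d + r) + 1 := by ring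
      have hWx : W (k*d + (r+1)) = W (k*d + r) + t (k*d + r) := by
        rw [hidx]; exact hWsucc _
      rcases ht01 (k*d + r) with h0 | h1
      · rw [if_neg (by omega)]
        simp only [hG, hHf, hWx, h0, Nat.add_zero, add_zero]
      · rw [if_pos h1]
        simp only [hG, hHf, hWx, h1]
        push_cast; ring
    have hunit : IsUnit ((e:ℤ) : ZMod m) := isUnit_intCast_of_gcd hem
    rcases column_dichotomy (G r) (G (r+1)) _ hunit (fun k => t (k*d + r) = 1)
      (hGinj r (by omega)) (hGinj (r+1) (by omega)) htrans with hall | hnone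
    · intro k hk
      have h1 := hall k hk
      have h2 := hall 0 hmpos
      rw [zero_mul, zero_add] at h2
      omega
    · intro k hk
      have h1 := hnone k hk
      have h2 := hnone 0 hmpos
      rw [zero_mul, zero_add] at h2
      rcases ht01 (k*d + r) with h3 | h3
      · rcases ht01 r with h4 | h4
        · omega
        · exact absurd h4 h2
      · exact absurd h3 h1
  have hWadd : ∀ u v, W (u + v) = W u + ∑ l ∈ Finset.range v, t (u + l) := by
    intro u v
    induction v with
    | zero => simp
    | succ v ih =>
      have : u + (v + 1) = (u + v) + 1 := by ring
      rw [this, hWsucc, ih, Finset.sum_range_succ]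
      exact add_assoc _ _ _
  have hWblock : ∀ k, k ≤ m → W (k * d) = k * W d := by
    intro k
    induction k with
    | zero => intro _; simp [hWdef]
    | succ k ih =>
      intro hk
      have hkm : k < m := hk
      have h1 : (k+1) * d = k * d + d := by ring
      rw [h1, hWadd, ih (by omega)]
      have h2 : ∑ l ∈ Finset.range d, t (k*d + l) = ∑ l ∈ Finset.range d, t l :=
        Finset.sum_congr rfl (fun l hl => hcol l (Finset.mem_range.mp hl) k hkm)
      rw [h2]
      have h3 : ∑ l ∈ Finset.range d, t l = W d := rfl
      rw [h3]; ring
  set f : ℕ := W d with hf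
  have hfd : f ≤ d := by
    have h1 : ∀ l ∈ Finset.range d, t l ≤ 1 := by
      intro l _; rcases ht01 l with h | h <;> omega
    calc f = ∑ l ∈ Finset.range d, t l := rfl
      _ ≤ ∑ _l ∈ Finset.range d, 1 := Finset.sum_le_sum h1
      _ = d := by simp
  have hG0 : ∀ k, k < m → G 0 k = (((k:ℤ) * (a + e * (f:ℤ)) : ℤ) : ZMod m) := by
    intro k hk
    have h1 : k * d + 0 = k * d := by ring
    simp only [hG, hHf, h1, hWblock k (le_of_lt hk)]
    push_cast; ring_nf
  have hsurj : Finset.image (G 0) (Finset.range m) = Finset.univ := by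
    apply Finset.eq_univ_of_card
    rw [Finset.card_image_of_injOn (hGinj 0 (by omega)), Finset.card_range, ZMod.card]
  have h1mem : (1 : ZMod m) ∈ Finset.image (G 0) (Finset.range m) := by
    rw [hsurj]; exact Finset.mem_univ _
  obtain ⟨k, hk, hk1⟩ := Finset.mem_image.mp h1mem
  have hkm := Finset.mem_range.mp hk
  rw [hG0 k hkm] at hk1
  have hunit2 : IsUnit (((a + e * (f:ℤ)) : ℤ) : ZMod m) := by
    apply IsUnit.of_mul_eq_one (((k:ℕ):ℤ) : ZMod m)
    rw [mul_comm]
    push_cast at hk1 ⊢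
    exact hk1
  have hgcd1 : Int.gcd (a + e * (f:ℤ)) m = 1 := gcd_eq_one_of_isUnit hunit2
  refine ⟨d - f, f, by omega, ?_⟩
  have harith : a * ((d - f : ℕ) : ℤ) + b * (f : ℤ) = (d:ℤ) * (a + e * (f:ℤ)) := by
    have hcast : ((d - f : ℕ) : ℤ) = (d:ℤ) - (f:ℤ) := by
      push_cast [hfd]; ring
    rw [hcast]
    linear_combination (f:ℤ) * hde
  rw [harith]
  have hcast2 : ((n:ℕ) : ℤ) = (d:ℤ) * (m:ℤ) := by rw [hn_dm]; push_cast; ring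
  rw [hcast2, Int.gcd_mul_left, hgcd1, Int.natAbs_natCast, mul_one]


lemma rankin_backward (n : ℕ) (hn : 1 ≤ n) (a b : ℤ)
    (h : Int.gcd (Int.gcd a b) n = 1)
    (i j : ℕ) (hij : i + j = Int.gcd (b - a) n)
    (hg : Int.gcd (b - a) n = Int.gcd (a * i + b * j) n) :
    IsHamiltonianCirculant n a b := by
  classical
  set d : ℕ := Int.gcd (b - a) n with hd
  have hdpos : 0 < d := Int.gcd_pos_iff.mpr (Or.inr (by exact_mod_cast (by omega : n ≠ 0)))
  have hdvdn : d ∣ n := by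
    have h1 : (d : ℤ) ∣ (n : ℤ) := Int.gcd_dvd_right _ _
    exact_mod_cast h1
  set m : ℕ := n / d with hm
  have hn_dm : n = d * m := (Nat.mul_div_cancel' hdvdn).symm
  have hmpos : 0 < m := by
    rcases Nat.eq_zero_or_pos m with h0 | hp; · rw [h0, Nat.mul_zero] at hn_dm; omega
    · exact hp
  have hdvdba : (d : ℤ) ∣ (b - a) := Int.gcd_dvd_left _ _
  set e : ℤ := (b - a) / (d : ℤ) with he
  have hde : (b - a) = (d : ℤ) * e := (Int.mul_ediv_cancel' hdvdba).symm
  have hcast2 : ((n:ℕ) : ℤ) = (d:ℤ) * (m:ℤ) := by rw [hn_dm]; push_cast; ring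
  have hijd : i + j = d := hij
  have hjd : j ≤ d := by omega
  have hid : (i : ℤ) = (d:ℤ) - (j:ℤ) := by
    have h1 : ((i : ℕ) : ℤ) + ((j : ℕ) : ℤ) = ((d : ℕ) : ℤ) := by exact_mod_cast hijd
    omega
  have harith : a * (i:ℤ) + b * (j:ℤ) = (d:ℤ) * (a + e * (j:ℤ)) := by
    rw [hid]; linear_combination (j:ℤ) * hde
  have hcop : Int.gcd (a + e * (j:ℤ)) m = 1 := by
    have h1 : Int.gcd ((d:ℤ) * (a + e * (j:ℤ))) ((d:ℤ) * (m:ℤ))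
        = (d:ℤ).natAbs * Int.gcd (a + e * (j:ℤ)) m := Int.gcd_mul_left _ _ _
    rw [← harith, ← hcast2, ← hg] at h1
    have h3 : (d:ℤ).natAbs = d := Int.natAbs_natCast d
    rw [h3] at h1
    exact (Nat.eq_of_mul_eq_mul_left hdpos (by omega)).symm
  have hcopm : IsCoprime ((m:ℕ):ℤ) (a + e * (j:ℤ)) :=
    (Int.isCoprime_iff_gcd_eq_one.mpr hcop).symm
  have hcopd : IsCoprime ((d:ℕ):ℤ) a := by
    have hga : ((Int.gcd a ((d:ℕ):ℤ) : ℕ):ℤ) ∣ a := Int.gcd_dvd_left _ _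
    have hgd : ((Int.gcd a ((d:ℕ):ℤ) : ℕ):ℤ) ∣ ((d:ℕ):ℤ) := Int.gcd_dvd_right _ _
    have hgb : ((Int.gcd a ((d:ℕ):ℤ) : ℕ):ℤ) ∣ b := by
      have h1 : ((Int.gcd a ((d:ℕ):ℤ) : ℕ):ℤ) ∣ (b - a) := dvd_trans hgd hdvdba
      have h2 := dvd_add hga h1
      simpa using h2
    have hgn : ((Int.gcd a ((d:ℕ):ℤ) : ℕ):ℤ) ∣ ((n:ℕ):ℤ) :=
      dvd_trans hgd (by exact_mod_cast hdvdn)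
    have h1 : ((Int.gcd a ((d:ℕ):ℤ) : ℕ):ℤ) ∣ ((Int.gcd a b : ℕ) : ℤ) := Int.dvd_coe_gcd hga hgb
    have h2 : ((Int.gcd a ((d:ℕ):ℤ) : ℕ):ℤ)
        ∣ ((Int.gcd ((Int.gcd a b : ℕ) : ℤ) ((n:ℕ):ℤ) : ℕ) : ℤ) := Int.dvd_coe_gcd h1 hgn
    rw [h] at h2
    have h3 : (Int.gcd a ((d:ℕ):ℤ) : ℕ) ∣ 1 := by exact_mod_cast h2
    have h4 : Int.gcd a ((d:ℕ):ℤ) = 1 := Nat.dvd_one.mp h3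
    exact (Int.isCoprime_iff_gcd_eq_one.mpr h4).symm
  set W : ℕ → ℕ := fun κ => (κ / d) * j + (κ % d - i) with hW
  set X : ℕ → ℤ := fun κ => (κ : ℤ) * a + (b - a) * (W κ : ℤ) with hX
  refine ⟨fun κ => ((X κ : ℤ) : ZMod n), ?_, ?_, ?_⟩
  · -- steps
    intro κ _
    have hqr : (κ/d) * d + κ % d = κ := by
      have h1 := Nat.div_add_mod κ d; rw [mul_comm] at h1; exact h1
    have hrd : κ % d < d := Nat.mod_lt κ hdpos
    have hWs : W (κ+1) = W κ + (if i ≤ κ % d then 1 else 0) := by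
      by_cases hcase : κ % d + 1 = d
      · have hdq : κ + 1 = d * (κ/d + 1) := by
          rw [Nat.mul_add, Nat.mul_one, mul_comm d (κ/d)]; omega
        have hdiv : (κ+1)/d = κ/d + 1 := by rw [hdq, Nat.mul_div_cancel_left _ hdpos]
        have hmod : (κ+1) % d = 0 := by rw [hdq]; exact Nat.mul_mod_right d _
        simp only [hW, hdiv, hmod]
        rw [Nat.add_mul, Nat.one_mul]
        split <;> omega
      · have h1 : κ % d + 1 < d := by omega
        have hdq : κ + 1 = (κ % d + 1) + (κ/d) * d := by omega
        have hdiv : (κ+1)/d = κ/d := by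
          rw [hdq, Nat.add_mul_div_right _ _ hdpos, Nat.div_eq_of_lt h1, Nat.zero_add]
        have hmod : (κ+1) % d = κ % d + 1 := by
          rw [hdq, Nat.add_mul_mod_self_right]; exact Nat.mod_eq_of_lt h1
        simp only [hW, hdiv, hmod]
        split <;> omega
    by_cases hc : i ≤ κ % d
    · right
      have hXs : X (κ+1) = X κ + b := by
        simp only [hX, hWs, if_pos hc]; push_cast; ring
      show ((X (κ+1) : ℤ) : ZMod n) = ((X κ : ℤ) : ZMod n) + ((b : ℤ) : ZMod n)
      rw [hXs]; push_cast; ring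
    · left
      have hXs : X (κ+1) = X κ + a := by
        simp only [hX, hWs, if_neg hc]; push_cast; ring
      show ((X (κ+1) : ℤ) : ZMod n) = ((X κ : ℤ) : ZMod n) + ((a : ℤ) : ZMod n)
      rw [hXs]; push_cast; ring
  · -- closure
    have hdiv : n / d = m := by rw [hn_dm, Nat.mul_div_cancel_left _ hdpos]
    have hmod : n % d = 0 := by rw [hn_dm]; exact Nat.mul_mod_right d m
    have hWn : W n = m * j := by simp only [hW, hdiv, hmod]; omega
    have hX0 : X 0 = 0 := by simp [hX, hW]
    have hXn : X n = ((n:ℕ):ℤ) * (a + e * (j:ℤ)) := by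
      simp only [hX, hWn]
      rw [hde, hcast2]; push_cast; ring
    show ((X n : ℤ) : ZMod n) = ((X 0 : ℤ) : ZMod n)
    rw [hXn, hX0]
    have h0 : ((((n:ℕ):ℤ) * (a + e * (j:ℤ)) : ℤ) : ZMod n) = 0 :=
      (ZMod.intCast_zmod_eq_zero_iff_dvd _ _).mpr ⟨_, rfl⟩
    rw [h0]
    simp
  · -- injectivity
    intro κ hκ κ' hκ' hxx
    have hxx' : ((X κ : ℤ) : ZMod n) = ((X κ' : ℤ) : ZMod n) := hxx
    have hqr : (κ/d) * d + κ % d = κ := by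
      have h1 := Nat.div_add_mod κ d; rw [mul_comm] at h1; exact h1
    have hqr' : (κ'/d) * d + κ' % d = κ' := by
      have h1 := Nat.div_add_mod κ' d; rw [mul_comm] at h1; exact h1
    have hrd : κ % d < d := Nat.mod_lt κ hdpos
    have hrd' : κ' % d < d := Nat.mod_lt κ' hdpos
    have hqm : κ/d < m := by
      by_contra hcon
      push_neg at hcon
      have h1 : m * d ≤ (κ/d) * d := Nat.mul_le_mul_right d hcon
      rw [hn_dm, mul_comm d m] at hκ; omega
    have hqm' : κ'/d < m := by
      by_contra hcon
      push_neg at hcon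
      have h1 : m * d ≤ (κ'/d) * d := Nat.mul_le_mul_right d hcon
      rw [hn_dm, mul_comm d m] at hκ'; omega
    have hdvd : ((n:ℕ):ℤ) ∣ (X κ' - X κ) :=
      (ZMod.intCast_eq_intCast_iff_dvd_sub _ _ _).mp hxx'
    have c1 : ((κ/d : ℕ):ℤ) * (d:ℤ) + ((κ % d : ℕ):ℤ) = (κ:ℤ) := by exact_mod_cast hqr
    have c2 : ((κ'/d : ℕ):ℤ) * (d:ℤ) + ((κ' % d : ℕ):ℤ) = (κ':ℤ) := by exact_mod_cast hqr'
    have hstepA : κ % d = κ' % d := by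
      have hdn' : ((d:ℕ):ℤ) ∣ ((n:ℕ):ℤ) := by exact_mod_cast hdvdn
      have h1 : ((d:ℕ):ℤ) ∣ (X κ' - X κ) := dvd_trans hdn' hdvd
      have h5 : X κ' - X κ = (((κ' % d : ℕ):ℤ) - ((κ % d : ℕ):ℤ)) * a
          + (d:ℤ) * (((((κ'/d : ℕ):ℤ) - ((κ/d : ℕ):ℤ))) * a + e * ((W κ' : ℤ) - (W κ : ℤ))) := by
        simp only [hX]
        rw [hde]
        linear_combination (a : ℤ) * (c2.symm) + (a:ℤ) * c1
      have h6 : ((d:ℕ):ℤ) ∣ (d:ℤ) * (((((κ'/d : ℕ):ℤ) - ((κ/d : ℕ):ℤ))) * a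
          + e * ((W κ' : ℤ) - (W κ : ℤ))) := ⟨_, rfl⟩
      have h4 : ((d:ℕ):ℤ) ∣ (((κ' % d : ℕ):ℤ) - ((κ % d : ℕ):ℤ)) * a := by
        have h7 := dvd_sub h1 h6
        rw [h5] at h7
        simpa using h7
      have h7 : ((d:ℕ):ℤ) ∣ (((κ' % d : ℕ):ℤ) - ((κ % d : ℕ):ℤ)) :=
        hcopd.dvd_of_dvd_mul_right h4
      by_contra hne
      have hne' : (((κ' % d : ℕ):ℤ) - ((κ % d : ℕ):ℤ)) ≠ 0 := by omega
      have h8 : ((d:ℕ):ℤ) ≤ |(((κ' % d : ℕ):ℤ) - ((κ % d : ℕ):ℤ))| :=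
        Int.le_of_dvd (abs_pos.mpr hne') ((dvd_abs _ _).mpr h7)
      have h9 : |(((κ' % d : ℕ):ℤ) - ((κ % d : ℕ):ℤ))| < ((d:ℕ):ℤ) := by
        rw [abs_lt]; constructor <;> omega
      linarith
    have c4 : ((κ' % d - i : ℕ):ℤ) = ((κ % d - i : ℕ):ℤ) := by rw [hstepA]
    have hXdiff : X κ' - X κ
        = (d:ℤ) * ((((κ'/d : ℕ):ℤ) - ((κ/d : ℕ):ℤ)) * (a + e * (j:ℤ))) := by
      have hc5 : (κ':ℤ) - (κ:ℤ) = (((κ'/d : ℕ):ℤ) - ((κ/d : ℕ):ℤ)) * (d:ℤ) := by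
        have c3 : ((κ' % d : ℕ):ℤ) = ((κ % d : ℕ):ℤ) := by exact_mod_cast hstepA.symm
        linarith [c1, c2, c3]
      have hWint : (W κ : ℤ) = ((κ/d : ℕ):ℤ) * (j:ℤ) + ((κ % d - i : ℕ):ℤ) := by
        simp only [hW]; push_cast; ring
      have hWint' : (W κ' : ℤ) = ((κ'/d : ℕ):ℤ) * (j:ℤ) + ((κ' % d - i : ℕ):ℤ) := by
        simp only [hW]; push_cast; ring
      simp only [hX, hWint, hWint', c4, hde]
      linear_combination (a:ℤ) * hc5
    have hd0 : ((d:ℕ):ℤ) ≠ 0 := by exact_mod_cast hdpos.ne'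
    rw [hXdiff, hcast2] at hdvd
    have hmd : ((m:ℕ):ℤ) ∣ (((κ'/d : ℕ):ℤ) - ((κ/d : ℕ):ℤ)) * (a + e * (j:ℤ)) :=
      (mul_dvd_mul_iff_left hd0).mp hdvd
    have hqdvd : ((m:ℕ):ℤ) ∣ (((κ'/d : ℕ):ℤ) - ((κ/d : ℕ):ℤ)) :=
      hcopm.dvd_of_dvd_mul_right hmd
    have hb1 : (0:ℤ) ≤ ((κ/d : ℕ):ℤ) := by positivity
    have hb2 : (0:ℤ) ≤ ((κ'/d : ℕ):ℤ) := by positivity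
    have hb3 : ((κ/d : ℕ):ℤ) < ((m:ℕ):ℤ) := by exact_mod_cast hqm
    have hb4 : ((κ'/d : ℕ):ℤ) < ((m:ℕ):ℤ) := by exact_mod_cast hqm'
    have hqeq : κ'/d = κ/d := by
      by_contra hne
      have hne2 : ((κ'/d : ℕ):ℤ) ≠ ((κ/d : ℕ):ℤ) := fun hcc => hne (by exact_mod_cast hcc)
      have hne' : (((κ'/d : ℕ):ℤ) - ((κ/d : ℕ):ℤ)) ≠ 0 := sub_ne_zero_of_ne hne2
      have h8 : ((m:ℕ):ℤ) ≤ |(((κ'/d : ℕ):ℤ) - ((κ/d : ℕ):ℤ))| :=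
        Int.le_of_dvd (abs_pos.mpr hne') ((dvd_abs _ _).mpr hqdvd)
      have h9 : |(((κ'/d : ℕ):ℤ) - ((κ/d : ℕ):ℤ))| < ((m:ℕ):ℤ) := by
        rw [abs_lt]; constructor <;> linarith
      linarith
    rw [hqeq] at hqr'
    omega


/-- `C⃗(n;a,b)` with `gcd(a,b,n) = 1` is Hamiltonian iff there are nonnegative
integers `i, j` with `i + j = gcd(b−a, n) = gcd(ai + bj, n)`. -/
theorem hamiltonian_iff_rankin (n : ℕ) (hn : 1 ≤ n) (a b : ℤ)
    (h : Int.gcd (Int.gcd a b) n = 1) :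
    IsHamiltonianCirculant n a b ↔
      ∃ i j : ℕ, i + j = Int.gcd (b - a) n ∧
        Int.gcd (b - a) n = Int.gcd (a * i + b * j) n := by
  constructor
  · intro H
    exact rankin_forward n hn a b H
  · rintro ⟨i, j, hij, hg⟩
    exact rankin_backward n hn a b h i j hij hg
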